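/- For any formula φ ∈ Φ, any integer i ≥ 0, and any extensive form game G, if ∅ ⊊ ⟦G^c_i(φ)⟧ ⊊ Ω(G), then ⟦G^c_{i+1}(φ)⟧ ⊊ ⟦G^c_i(φ)⟧ (a strict inclusion). -/

import Mathlib

/-- An extensive form game: a nonempty finite rooted tree. Nodes are represented as
positions, i.e. lists of child indices with the *head* being the most recent step,
so the root is `[]` and the parent of `i :: t` is `t`. Each node carries an agent
label (meaningful on non-leaf nodes) and a set of propositional variables
(meaningful on leaf nodes, the outcomes). -/
structure Game (Agent PropVar : Type) where
  Node : Set (List ℕ)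
  root_mem : [] ∈ Node
  downward : ∀ (i : ℕ) (t : List ℕ), i :: t ∈ Node → t ∈ Node
  finite : Node.Finite
  label : List ℕ → Agent
  leafLabel : List ℕ → Set PropVar

namespace Game

variable {Agent PropVar : Type}

/-- A leaf node (outcome) of the game. -/
def IsOutcome (G : Game Agent PropVar) (w : List ℕ) : Prop :=
  w ∈ G.Node ∧ ∀ i : ℕ, i :: w ∉ G.Node

/-- The set `Ω(G)` of outcomes (leaf nodes) of the game. -/
def outcomes (G : Game Agent PropVar) : Set (List ℕ) := {w | G.IsOutcome w}

/-- `w ⪯ n`: node `n` lies on the simple path (including endpoints) from the root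
to `w`; in the position representation this means `n` is a suffix of `w`. -/
def below (w n : List ℕ) : Prop := n <:+ w

/-- A non-root node `n` is an `X`-achievement point by agent `a` if (1) its parent is
labelled with `a`, (2) some outcome `w ⪯ parent(n)` is not in `X`, and (3) every
outcome `w ⪯ n` is in `X`. -/
def AchievePoint (G : Game Agent PropVar) (X : Set (List ℕ)) (a : Agent) (n : List ℕ) : Prop :=
  ∃ (i : ℕ) (t : List ℕ), n = i :: t ∧ n ∈ G.Node ∧ G.label t = a ∧
    (∃ w ∈ G.outcomes, t <:+ w ∧ w ∉ X) ∧
    (∀ w ∈ G.outcomes, n <:+ w → w ∈ X)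

/-- `win_a(X)`: the minimal set of nodes containing `X`, containing every non-leaf
node labelled `a` with at least one child in the set, and containing every non-leaf
node not labelled `a` all of whose children are in the set. -/
inductive Win (G : Game Agent PropVar) (a : Agent) (X : Set (List ℕ)) : List ℕ → Prop
  | mem (w : List ℕ) (hw : w ∈ X) : Win G a X w
  | own (n : List ℕ) (hn : n ∈ G.Node) (hl : G.label n = a) (i : ℕ)
      (hi : i :: n ∈ G.Node) (h : Win G a X (i :: n)) : Win G a X n
  | other (n : List ℕ) (hn : n ∈ G.Node) (hl : G.label n ≠ a)
      (hne : ∃ i : ℕ, i :: n ∈ G.Node)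
      (h : ∀ i : ℕ, i :: n ∈ G.Node → Win G a X (i :: n)) : Win G a X n

/-- The semantic counterfactual-responsibility operator on sets of outcomes:
`Cset a X` is the set of outcomes `w ∈ X` such that some node `n` with `w ⪯ n`
belongs to `win_a(Ω(G) ∖ X)`. -/
def Cset (G : Game Agent PropVar) (a : Agent) (X : Set (List ℕ)) : Set (List ℕ) :=
  {w | w ∈ X ∧ ∃ n : List ℕ, n <:+ w ∧ G.Win a (G.outcomes \ X) n}

/-- The semantic seeing-to-it-responsibility operator on sets of outcomes:
`Sset a X` is the set of outcomes `w` such that (a) every node `n` with `w ⪯ n`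
belongs to `win_a(X)` and (b) there is an `X`-achievement point `n` by agent `a`
with `w ⪯ n`. -/
def Sset (G : Game Agent PropVar) (a : Agent) (X : Set (List ℕ)) : Set (List ℕ) :=
  {w | w ∈ G.outcomes ∧ (∀ n : List ℕ, n <:+ w → G.Win a X n) ∧
    ∃ n : List ℕ, G.AchievePoint X a n ∧ n <:+ w}

end Game

/-- The language `Φ`: `φ ::= p | ¬φ | φ∧φ | C_a φ | S_a φ`. -/
inductive Formula (Agent PropVar : Type) where
  | var : PropVar → Formula Agent PropVar
  | neg : Formula Agent PropVar → Formula Agent PropVar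
  | and : Formula Agent PropVar → Formula Agent PropVar → Formula Agent PropVar
  | C : Agent → Formula Agent PropVar → Formula Agent PropVar
  | S : Agent → Formula Agent PropVar → Formula Agent PropVar

namespace Game

variable {Agent PropVar : Type}

/-- The truth set `⟦φ⟧ ⊆ Ω(G)` of a formula. -/
def truth (G : Game Agent PropVar) : Formula Agent PropVar → Set (List ℕ)
  | .var p => {w | w ∈ G.outcomes ∧ p ∈ G.leafLabel w}
  | .neg φ => G.outcomes \ G.truth φ
  | .and φ ψ => G.truth φ ∩ G.truth ψ
  | .C a φ => G.Cset a (G.truth φ)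
  | .S a φ => G.Sset a (G.truth φ)

/-- The truth set of the `i`-th order counterfactual gap formula
`G^c_0(φ) := φ`, `G^c_{i+1}(φ) := G^c_i(φ) ∧ ⋀_{a∈𝒜} ¬C_a G^c_i(φ)`. -/
def gapCIter (G : Game Agent PropVar) (φ : Formula Agent PropVar) : ℕ → Set (List ℕ)
  | 0 => G.truth φ
  | i + 1 => G.gapCIter φ i ∩ ⋂ a : Agent, (G.outcomes \ G.Cset a (G.gapCIter φ i))

/-- The truth set of the `i`-th order combined gap formula
`G^{c,s}_0(φ) := φ`,
`G^{c,s}_{i+1}(φ) := G^{c,s}_i(φ) ∧ ⋀_{a∈𝒜} ¬C_a G^{c,s}_i(φ) ∧ ⋀_{a∈𝒜} ¬S_a G^{c,s}_i(φ)`. -/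
def gapCSIter (G : Game Agent PropVar) (φ : Formula Agent PropVar) : ℕ → Set (List ℕ)
  | 0 => G.truth φ
  | i + 1 => G.gapCSIter φ i ∩ (⋂ a : Agent, (G.outcomes \ G.Cset a (G.gapCSIter φ i)))
      ∩ (⋂ a : Agent, (G.outcomes \ G.Sset a (G.gapCSIter φ i)))

end Game

/-- `φ` contains no occurrence of the modality `C`. -/
def Formula.noC {Agent PropVar : Type} : Formula Agent PropVar → Prop
  | .var _ => True
  | .neg φ => φ.noC
  | .and φ ψ => φ.noC ∧ ψ.noC
  | .C _ _ => False
  | .S _ φ => φ.noC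

/-- `φ` contains no occurrence of the modality `S`. -/
def Formula.noS {Agent PropVar : Type} : Formula Agent PropVar → Prop
  | .var _ => True
  | .neg φ => φ.noS
  | .and φ ψ => φ.noS ∧ ψ.noS
  | .C _ φ => φ.noS
  | .S _ _ => False

namespace GapAux

variable {Agent PropVar : Type}

lemma mem_node_append (G : Game Agent PropVar) :
    ∀ (l t : List ℕ), l ++ t ∈ G.Node → t ∈ G.Node := by
  intro l
  induction l with
  | nil => intro t h; exact h
  | cons i l ih => intro t h; exact ih t (G.downward i (l ++ t) h)

lemma mem_node_of_suffix (G : Game Agent PropVar) {t w : List ℕ}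
    (ht : t <:+ w) (hw : w ∈ G.Node) : t ∈ G.Node := by
  obtain ⟨l, rfl⟩ := ht
  exact mem_node_append G l t hw

/-- If `t` is a proper suffix of `w`, some one-step extension `i :: t` is a suffix of `w`. -/
lemma exists_cons_suffix {t w : List ℕ} (h : t <:+ w) (hne : t ≠ w) :
    ∃ i : ℕ, i :: t <:+ w := by
  obtain ⟨l, rfl⟩ := h
  rcases List.eq_nil_or_concat l with rfl | ⟨l', i, rfl⟩
  · simp at hne
  · exact ⟨i, ⟨l', by simp⟩⟩

/-- Every node has an outcome below it. -/
lemma exists_outcome_below (G : Game Agent PropVar) {m : List ℕ} (hm : m ∈ G.Node) :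
    ∃ w, G.IsOutcome w ∧ m <:+ w := by
  have hfin : ({k ∈ G.Node | m <:+ k}).Finite := G.finite.subset (fun k hk => hk.1)
  obtain ⟨w, hwS, hmax⟩ := Set.Finite.exists_maximalFor List.length _ hfin
    ⟨m, hm, List.suffix_rfl⟩
  refine ⟨w, ⟨hwS.1, ?_⟩, hwS.2⟩
  intro i hi
  have hmem : i :: w ∈ {k ∈ G.Node | m <:+ k} :=
    ⟨hi, hwS.2.trans (List.suffix_cons i w)⟩
  have := hmax hmem (by simp)
  simp at this

/-- If every outcome below `m` lies outside `X`, then every agent wins `Ω ∖ X` at `m`. -/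
lemma win_all (G : Game Agent PropVar) (a : Agent) (X : Set (List ℕ)) :
    ∀ (k : ℕ) (m : List ℕ), ({n ∈ G.Node | m <:+ n}).ncard ≤ k → m ∈ G.Node →
      (∀ w, G.IsOutcome w → m <:+ w → w ∉ X) → G.Win a (G.outcomes \ X) m := by
  intro k
  induction k with
  | zero =>
    intro m hcard hm _
    have hfin : ({n ∈ G.Node | m <:+ n}).Finite := G.finite.subset (fun k hk => hk.1)
    have : ({n ∈ G.Node | m <:+ n}) = ∅ := by
      rw [← Set.ncard_eq_zero hfin]; omega
    exact absurd (Set.eq_empty_iff_forall_notMem.mp this m) (by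
      intro h; exact h ⟨hm, List.suffix_rfl⟩)
  | succ k ih =>
    intro m hcard hm hX
    by_cases hleaf : ∃ i : ℕ, i :: m ∈ G.Node
    · -- non-leaf node
      have hchild : ∀ i : ℕ, i :: m ∈ G.Node → G.Win a (G.outcomes \ X) (i :: m) := by
        intro i hi
        have hss : {n ∈ G.Node | i :: m <:+ n} ⊂ {n ∈ G.Node | m <:+ n} := by
          constructor
          · intro n hn
            exact ⟨hn.1, (List.suffix_cons i m).trans hn.2⟩
          · intro hsup
            have hmmem := hsup ⟨hm, List.suffix_rfl⟩
            have := hmmem.2.length_le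
            simp at this
        have hfin : ({n ∈ G.Node | m <:+ n}).Finite := G.finite.subset (fun k hk => hk.1)
        have hlt : ({n ∈ G.Node | i :: m <:+ n}).ncard < ({n ∈ G.Node | m <:+ n}).ncard :=
          Set.ncard_lt_ncard hss hfin
        refine ih (i :: m) (by omega) hi ?_
        intro w hw hsw
        exact hX w hw ((List.suffix_cons i m).trans hsw)
      by_cases hlab : G.label m = a
      · obtain ⟨i, hi⟩ := hleaf
        exact Game.Win.own m hm hlab i hi (hchild i hi)
      · exact Game.Win.other m hm hlab hleaf hchild
    · -- leaf: m itself is an outcome outside X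
      push_neg at hleaf
      have hout : G.IsOutcome m := ⟨hm, hleaf⟩
      exact Game.Win.mem m ⟨hout, hX m hout List.suffix_rfl⟩

/-- Key lemma: if `∅ ⊊ X ⊊ Ω` (with `X ⊆ Ω`), then some outcome of `X` is in `Cset a X`
for some agent `a`. -/
lemma exists_cset (G : Game Agent PropVar) (X : Set (List ℕ))
    (hXsub : X ⊆ G.outcomes) (hne : X.Nonempty) (hneΩ : (G.outcomes \ X).Nonempty) :
    ∃ (a : Agent) (w : List ℕ), w ∈ X ∧ w ∈ G.Cset a X := by
  obtain ⟨w1, hw1X⟩ := hne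
  obtain ⟨w0, hw0Ω, hw0X⟩ := hneΩ
  set T : Set (List ℕ) :=
    {n ∈ G.Node | (∃ w, G.IsOutcome w ∧ n <:+ w ∧ w ∈ X) ∧
      (∃ w, G.IsOutcome w ∧ n <:+ w ∧ w ∉ X)} with hT
  have hTfin : T.Finite := G.finite.subset (fun k hk => hk.1)
  have hTne : T.Nonempty := by
    refine ⟨[], G.root_mem, ⟨w1, hXsub hw1X, List.nil_suffix, hw1X⟩,
      ⟨w0, hw0Ω, List.nil_suffix, hw0X⟩⟩
  obtain ⟨n, hnT, hmax⟩ := Set.Finite.exists_maximalFor List.length _ hTfin hTne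
  obtain ⟨hnNode, ⟨w1', hw1'out, hw1'suf, hw1'X⟩, ⟨w0', hw0'out, hw0'suf, hw0'X⟩⟩ := hnT
  -- n is not a leaf: w1' ≠ w0', so at least one is a proper descendant; and if n were a
  -- leaf neither could be a proper descendant.
  have hne10 : w1' ≠ w0' := by intro h; rw [h] at hw1'X; exact hw0'X hw1'X
  have hw0'ne : w0' ≠ n := by
    intro h
    -- then n is an outcome, so w1' = n, contradiction with w1' ∈ X, w0' ∉ X
    subst h
    obtain ⟨i, hi⟩ := exists_cons_suffix hw1'suf hne10.symm
    exact hw0'out.2 i (mem_node_of_suffix G hi hw1'out.1)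
  obtain ⟨i0, hi0suf⟩ := exists_cons_suffix hw0'suf (fun h => hw0'ne h.symm)
  have hi0Node : i0 :: n ∈ G.Node := mem_node_of_suffix G hi0suf hw0'out.1
  have hw1'ne : w1' ≠ n := by
    intro h; subst h
    exact hw1'out.2 i0 hi0Node
  obtain ⟨i1, hi1suf⟩ := exists_cons_suffix hw1'suf (fun h => hw1'ne h.symm)
  have hi1Node : i1 :: n ∈ G.Node := mem_node_of_suffix G hi1suf hw1'out.1
  -- by maximality, the child i0 :: n has no X-outcome below it
  have hpure : ∀ w, G.IsOutcome w → i0 :: n <:+ w → w ∉ X := by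
    intro w hw hsw hwX
    have hmem : i0 :: n ∈ T :=
      ⟨hi0Node, ⟨w, hw, hsw, hwX⟩, ⟨w0', hw0'out, hi0suf, hw0'X⟩⟩
    have := hmax hmem (by simp)
    simp at this
  -- agent label(n) wins Ω \ X at n
  have hwin : G.Win (G.label n) (G.outcomes \ X) n :=
    Game.Win.own n hnNode rfl i0 hi0Node
      (win_all G (G.label n) X _ (i0 :: n) le_rfl hi0Node hpure)
  refine ⟨G.label n, w1', hw1'X, hw1'X, n, (List.suffix_cons i1 n).trans hi1suf, hwin⟩

end GapAux

/-- if `∅ ⊊ ⟦G^c_i(φ)⟧ ⊊ Ω(G)`, then `⟦G^c_{i+1}(φ)⟧ ⊊ ⟦G^c_i(φ)⟧`. -/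
theorem gapC_strict_decrease {Agent PropVar : Type} [Fintype Agent]
    (G : Game Agent PropVar) (φ : Formula Agent PropVar) (i : ℕ)
    (h1 : (∅ : Set (List ℕ)) ⊂ G.gapCIter φ i)
    (h2 : G.gapCIter φ i ⊂ G.outcomes) :
    G.gapCIter φ (i + 1) ⊂ G.gapCIter φ i := by
  set X := G.gapCIter φ i with hX
  have hXsub : X ⊆ G.outcomes := h2.1
  have hne : X.Nonempty := by
    rcases Set.eq_empty_or_nonempty X with h | h
    · exact absurd h (ne_of_ssubset h1).symm
    · exact h
  have hneΩ : (G.outcomes \ X).Nonempty := by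
    obtain ⟨w, hwΩ, hwX⟩ := Set.exists_of_ssubset h2
    exact ⟨w, hwΩ, hwX⟩
  obtain ⟨a, w, hwX, hwC⟩ := GapAux.exists_cset G X hXsub hne hneΩ
  constructor
  · intro v hv
    exact hv.1
  · intro hsub
    have hw' : w ∈ G.gapCIter φ (i + 1) := hsub hwX
    have := hw'.2
    rw [Set.mem_iInter] at this
    exact (this a).2 hwC
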